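/- For every graph G on n vertices, every k, and every tree T on vertex set V(G), d_k(G) ≥ C(n,k) − Σ_{v∈V(G)} C(n−|N[v]|, k) + Σ_{uv∈E(T)} C(n − |N[u] ∪ N[v]|, k). -/
import Mathlib


open Finset

/-- The closed neighborhood of a vertex as a `Finset`. -/
def closedNbhd {V : Type*} [Fintype V] [DecidableEq V] (G : SimpleGraph V)
    [DecidableRel G.Adj] (v : V) : Finset V :=
  insert v (G.neighborFinset v)

/-- The number of dominating sets of size `k`. -/
def domCount {V : Type*} [Fintype V] [DecidableEq V] (G : SimpleGraph V)
    [DecidableRel G.Adj] (k : ℕ) : ℕ :=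
  ((univ.powersetCard k).filter (fun S : Finset V => ∀ v : V, ∃ u ∈ S, u ∈ closedNbhd G v)).card

lemma exists_parent {V : Type*} {T : SimpleGraph V} (hT : T.Connected) {v r : V}
    (hvr : v ≠ r) : ∃ u, T.Adj v u ∧ T.dist u r < T.dist v r := by
  obtain ⟨p, hp⟩ := hT.exists_walk_length_eq_dist v r
  cases p with
  | nil => exact absurd rfl hvr
  | cons h q =>
    refine ⟨_, h, ?_⟩
    have := SimpleGraph.dist_le q
    simp only [SimpleGraph.Walk.length_cons] at hp
    omega

/-- Overlap-corrected union bound: for any tree `T` on the vertex set of `G`,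
`d_k(G) ≥ C(n,k) - Σ_v C(n-|N[v]|,k) + Σ_{uv ∈ E(T)} C(n-|N[u] ∪ N[v]|,k)`. -/
theorem domCount_overlap_bound {V : Type*} [Fintype V] [DecidableEq V]
    (G : SimpleGraph V) [DecidableRel G.Adj] (k : ℕ)
    (T : SimpleGraph V) [DecidableRel T.Adj] (hT : T.Connected) (hT' : T.IsAcyclic) :
    (domCount G k : ℤ)
      ≥ ((Fintype.card V).choose k : ℤ)
        - ∑ v : V, ((Fintype.card V - (closedNbhd G v).card).choose k : ℤ)
        + ∑ e ∈ T.edgeFinset,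
            Sym2.lift ⟨fun u v =>
                (((Fintype.card V - (closedNbhd G u ∪ closedNbhd G v).card).choose k : ℕ) : ℤ),
              fun u v => by simp [union_comm]⟩ e := by
  classical
  set n := Fintype.card V with hn
  set N : V → Finset V := closedNbhd G with hN
  set A : V → Finset (Finset V) := fun v => (univ \ N v).powersetCard k with hA
  -- cardinalities
  have cardA : ∀ v, (A v).card = (n - (N v).card).choose k := by
    intro v
    rw [hA]
    rw [Finset.card_powersetCard, Finset.card_sdiff_of_subset (Finset.subset_univ _), Finset.card_univ]
  have interA : ∀ u v, A u ∩ A v = (univ \ (N u ∪ N v)).powersetCard k := by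
    intro u v
    ext S
    simp only [hA, Finset.mem_inter, Finset.mem_powersetCard, Finset.subset_sdiff,
      Finset.disjoint_union_right]
    tauto
  have cardAint : ∀ u v, (A u ∩ A v).card = (n - (N u ∪ N v).card).choose k := by
    intro u v
    rw [interA, Finset.card_powersetCard, Finset.card_sdiff_of_subset (Finset.subset_univ _),
      Finset.card_univ]
  -- the root
  have : Nonempty V := hT.nonempty
  obtain ⟨r⟩ := this
  -- parent function
  have key : ∀ v : V, ∃ u : V, v ≠ r → T.Adj v u ∧ T.dist u r < T.dist v r := by
    intro v
    by_cases h : v = r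
    · exact ⟨r, fun h' => absurd h h'⟩
    · exact (exists_parent hT h).imp fun u hu => fun _ => hu
  choose p hp using key
  -- covering claim
  have cover : ∀ (d : ℕ) (v : V), T.dist v r ≤ d → ∀ S ∈ A v,
      S ∈ A r ∨ ∃ w, w ≠ r ∧ S ∈ A w ∧ S ∉ A (p w) := by
    intro d
    induction d with
    | zero =>
      intro v hv S hS
      have : v = r := by
        have := (hT.dist_eq_zero_iff (u := v) (v := r)).mp (Nat.le_zero.mp hv)
        exact this
      exact Or.inl (this ▸ hS)
    | succ d ih =>
      intro v hv S hS
      by_cases hvr : v = r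
      · exact Or.inl (hvr ▸ hS)
      · by_cases hSp : S ∈ A (p v)
        · exact ih (p v) (by have := (hp v hvr).2; omega) S hSp
        · exact Or.inr ⟨v, hvr, hS, hSp⟩
  -- bad sets
  set D : Finset (Finset V) :=
    (univ.powersetCard k).filter
      (fun S : Finset V => ¬ ∀ v : V, ∃ u ∈ S, u ∈ closedNbhd G v) with hD
  have hsplit : domCount G k + D.card = n.choose k := by
    rw [domCount, hD, Finset.card_filter_add_card_filter_not,
      Finset.card_powersetCard, Finset.card_univ]
  -- D is covered
  have hDsub : D ⊆ A r ∪ (univ.erase r).biUnion (fun v => A v \ A (p v)) := by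
    intro S hS
    rw [hD, Finset.mem_filter] at hS
    obtain ⟨hS1, hS2⟩ := hS
    push_neg at hS2
    obtain ⟨v, hv⟩ := hS2
    have hSv : S ∈ A v := by
      rw [hA, Finset.mem_powersetCard]
      rw [Finset.mem_powersetCard] at hS1
      refine ⟨?_, hS1.2⟩
      intro x hx
      rw [Finset.mem_sdiff]
      exact ⟨Finset.mem_univ x, fun hxN => hv x hx hxN⟩
    rcases cover (T.dist v r) v le_rfl S hSv with h | ⟨w, hwr, hw1, hw2⟩
    · exact Finset.mem_union_left _ h
    · refine Finset.mem_union_right _ (Finset.mem_biUnion.mpr ⟨w, Finset.mem_erase.mpr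
        ⟨hwr, Finset.mem_univ w⟩, Finset.mem_sdiff.mpr ⟨hw1, hw2⟩⟩)
  have hDcard : D.card ≤ (A r).card + ∑ v ∈ univ.erase r, (A v \ A (p v)).card :=
    le_trans (Finset.card_le_card hDsub)
      (le_trans (Finset.card_union_le _ _)
        (by gcongr; exact Finset.card_biUnion_le))
  -- edgeFinset is exactly the set of parent edges
  have hTree : T.IsTree := ⟨hT, hT'⟩
  have hinj : Set.InjOn (fun v => s(v, p v)) (univ.erase r : Finset V) := by
    intro a ha b hb hab
    rw [Finset.mem_coe, Finset.mem_erase] at ha hb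
    have ha' : a ≠ r := ha.1
    have hb' : b ≠ r := hb.1
    rw [Sym2.eq_iff] at hab
    rcases hab with ⟨h1, _⟩ | ⟨h1, h2⟩
    · exact h1
    · exfalso
      have d1 := (hp a ha').2
      have d2 := (hp b hb').2
      rw [h2] at d1
      rw [← h1] at d2
      omega
  have himg : (univ.erase r).image (fun v => s(v, p v)) = T.edgeFinset := by
    apply Finset.eq_of_subset_of_card_le
    · intro e he
      rw [Finset.mem_image] at he
      obtain ⟨v, hv, rfl⟩ := he
      rw [SimpleGraph.mem_edgeFinset, SimpleGraph.mem_edgeSet]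
      exact (hp v (Finset.mem_erase.mp hv).1).1
    · rw [Finset.card_image_of_injOn (by exact_mod_cast hinj)]
      have h1 := hTree.card_edgeFinset
      have h2 : (univ.erase r).card = n - 1 := by
        rw [Finset.card_erase_of_mem (Finset.mem_univ r), Finset.card_univ]
      omega
  -- rewrite the edge sum
  set f : Sym2 V → ℤ := Sym2.lift ⟨fun u v =>
      (((n - (closedNbhd G u ∪ closedNbhd G v).card).choose k : ℕ) : ℤ),
    fun u v => by simp [union_comm]⟩ with hf
  have hedgesum : ∑ e ∈ T.edgeFinset, f e
      = ∑ v ∈ univ.erase r, ((A v ∩ A (p v)).card : ℤ) := by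
    rw [← himg, Finset.sum_image (fun a ha b hb h => hinj ha hb h)]
    refine Finset.sum_congr rfl fun v _ => ?_
    rw [hf, Sym2.lift_mk, cardAint]
  -- final computation
  have hsdiff : ∀ v, ((A v \ A (p v)).card : ℤ)
      = ((A v).card : ℤ) - ((A v ∩ A (p v)).card : ℤ) := by
    intro v
    have := Finset.card_inter_add_card_sdiff (A v) (A (p v))
    omega
  have hsum : ∑ v : V, ((A v).card : ℤ)
      = ((A r).card : ℤ) + ∑ v ∈ univ.erase r, ((A v).card : ℤ) := by
    rw [← Finset.add_sum_erase _ _ (Finset.mem_univ r)]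
  have hcast : ∀ v, ((A v).card : ℤ) = ((n - (N v).card).choose k : ℤ) := by
    intro v; exact_mod_cast congrArg (Nat.cast (R := ℤ)) (cardA v)
  have goal2 : (∑ v : V, ((n - (N v).card).choose k : ℤ))
      = ∑ v : V, ((A v).card : ℤ) := by
    refine Finset.sum_congr rfl fun v _ => (hcast v).symm
  rw [hedgesum, goal2]
  have hDcard' : (D.card : ℤ) ≤ ((A r).card : ℤ)
      + ∑ v ∈ univ.erase r, (((A v).card : ℤ) - ((A v ∩ A (p v)).card : ℤ)) := by
    calc (D.card : ℤ) ≤ ((A r).card : ℤ) + ∑ v ∈ univ.erase r, ((A v \ A (p v)).card : ℤ) := by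
          exact_mod_cast hDcard
      _ = _ := by rw [Finset.sum_congr rfl fun v _ => hsdiff v]
  have hsplit' : (domCount G k : ℤ) + (D.card : ℤ) = (n.choose k : ℤ) := by
    exact_mod_cast hsplit
  rw [Finset.sum_sub_distrib] at hDcard'
  rw [hsum]
  linarith
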